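/- Let α > 0, λ > 0, ε ∈ [0,1], β ≥ 0, Δ_IN > 0, Δ_OUT > 0 be real numbers. Define Δ_eff = (1-ε)Δ_IN + εΔ_OUT, Γ = 1 + ε(β-1), Λ = 1 + Δ_eff + ε(β²-1), p = α + λ, c = α - λ, and t = √((p-1)² + 4λ). Define Σ = (1 - α - λ + t)/(2λ), Σ̂ = (-1 + α - λ + t)/2, m = 2αΓ/(p + t + 1), q = 4α[αΓ²(p+t-3) + Λ(p+t+1)] / [(p+t+1)(p² - 2c + t² + 2t(p+1) + 1)], m̂ = m(λ + Σ̂), and q̂ = q(λ + Σ̂)² - m̂². Then these six values satisfy the ℓ2-loss self-consistent equations: m = m̂/(λ + Σ̂), q = (m̂² + q̂)/(λ + Σ̂)², Σ = 1/(λ + Σ̂), m̂ = αΓ/(1 + Σ), Σ̂ = α/(1 + Σ), and q̂ = (α/(1+Σ)²)·[1 + q + Δ_eff + ε(β²-1) - 2mΓ]. -/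

import Mathlib

set_option maxHeartbeats 1000000

/-- Explicit closed-form solution of the ℓ2-loss self-consistent equations for
ridge regression on the double-Gaussian outlier data model. -/
theorem ridge_explicit_solution_satisfies_selfconsistent_equations
    (α lam ε β ΔIN ΔOUT : ℝ)
    (hα : 0 < α) (hlam : 0 < lam) (hε : ε ∈ Set.Icc (0 : ℝ) 1) (hβ : 0 ≤ β)
    (hIN : 0 < ΔIN) (hOUT : 0 < ΔOUT)
    (Δeff Γ Λ p c t S Sh m q mh qh : ℝ)
    (hΔeff : Δeff = (1 - ε) * ΔIN + ε * ΔOUT)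
    (hΓ : Γ = 1 + ε * (β - 1))
    (hΛ : Λ = 1 + Δeff + ε * (β ^ 2 - 1))
    (hp : p = α + lam) (hc : c = α - lam)
    (ht : t = Real.sqrt ((p - 1) ^ 2 + 4 * lam))
    (hS : S = (1 - α - lam + t) / (2 * lam))
    (hSh : Sh = (-1 + α - lam + t) / 2)
    (hm : m = 2 * α * Γ / (p + t + 1))
    (hq : q = 4 * α * (α * Γ ^ 2 * (p + t - 3) + Λ * (p + t + 1)) /
      ((p + t + 1) * (p ^ 2 - 2 * c + t ^ 2 + 2 * t * (p + 1) + 1)))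
    (hmh : mh = m * (lam + Sh))
    (hqh : qh = q * (lam + Sh) ^ 2 - mh ^ 2) :
    m = mh / (lam + Sh) ∧
    q = (mh ^ 2 + qh) / (lam + Sh) ^ 2 ∧
    S = 1 / (lam + Sh) ∧
    mh = α * Γ / (1 + S) ∧
    Sh = α / (1 + S) ∧
    qh = α / (1 + S) ^ 2 * (1 + q + Δeff + ε * (β ^ 2 - 1) - 2 * m * Γ) := by
  set s : ℝ := lam + Sh with hsdef
  have ht0 : 0 ≤ t := ht ▸ Real.sqrt_nonneg _
  have ht2 : t ^ 2 = (p - 1) ^ 2 + 4 * lam := by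
    rw [ht, Real.sq_sqrt]; positivity
  have hts : t = 2 * s - p + 1 := by rw [hsdef, hSh, hp]; ring
  have hs0 : 0 < s := by nlinarith [ht2, ht0, hlam]
  have hkey : s ^ 2 = (p - 1) * s + lam := by
    have h := hts ▸ ht2
    nlinarith [h]
  have hs1 : 0 < s + 1 := by linarith
  have hs_t : s = (t + p - 1) / 2 := by linarith [hts]
  have h4 : 4 * ((s + 1) ^ 2 - α) =
      2 * (α - 1) ^ 2 + 4 * α * lam + 2 * lam ^ 2 + 4 * lam + 2 * t * (α + lam + 1) := by
    rw [hs_t]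
    linear_combination ht2 + (2 * α + 2 * lam + 2 - 2 * p) * hp + (t + p + 1) * hp +
      (t + 3 * p - 3) * hp
  have hsp : 0 < (s + 1) ^ 2 - α := by
    nlinarith [h4, mul_nonneg ht0 (by linarith : (0:ℝ) ≤ α + lam + 1), sq_nonneg (α - 1),
      mul_pos hα hlam, sq_nonneg lam]
  have hs0' : s ≠ 0 := ne_of_gt hs0
  have hs1' : (s + 1) ≠ 0 := ne_of_gt hs1
  have hsp' : (s + 1) ^ 2 - α ≠ 0 := ne_of_gt hsp
  have hpt1 : p + t + 1 = 2 * (s + 1) := by rw [hts]; ring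
  have hm' : m = α * Γ / (s + 1) := by
    rw [hm, hpt1]
    rw [div_eq_div_iff (by positivity) hs1']
    ring
  have hq' : q = α * (α * Γ ^ 2 * (s - 1) + Λ * (s + 1)) / ((s + 1) * ((s + 1) ^ 2 - α)) := by
    have hD : p ^ 2 - 2 * c + t ^ 2 + 2 * t * (p + 1) + 1 = 4 * ((s + 1) ^ 2 - α) := by
      rw [hts, hc, hp]; ring
    rw [hq, hD, hpt1, hts]
    rw [div_eq_div_iff (by positivity) (by positivity)]
    ring
  have hS3 : S = 1 / s := by
    rw [hS, hts, div_eq_div_iff (by positivity : (2:ℝ) * lam ≠ 0) hs0']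
    linear_combination 2 * hkey + s * hp
  have h1S : 1 + S = (s + 1) / s := by rw [hS3]; field_simp
  refine ⟨?_, ?_, ?_, ?_, ?_, ?_⟩
  · rw [hmh, mul_div_assoc, div_self hs0', mul_one]
  · rw [hqh]; field_simp; ring
  · exact hS3
  · rw [hmh, hm', h1S]
    field_simp
  · rw [h1S]
    have hSh' : Sh = s - lam := by rw [hsdef]; ring
    rw [hSh', div_div_eq_mul_div, eq_div_iff hs1']
    linear_combination hkey + s * hp
  · rw [hqh, hmh, hm', hq', h1S, hΛ]
    field_simp
    ring
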